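/- For every k ≥ 1, every k-UM-critical tree has exactly 2^{k−1} vertices. -/

import Mathlib

open scoped Classical

noncomputable section

/-- A conflict-free coloring of a hyperedge set `E` with `k` colors: every hyperedge
has some color occurring on exactly one of its vertices. -/
def IsCFColoring {V : Type} {k : ℕ} (E : Set (Finset V)) (C : V → Fin k) : Prop :=
  ∀ e ∈ E, ∃ c : Fin k, (e.filter fun v => C v = c).card = 1

/-- A unique-maximum coloring of a hyperedge set `E` with `k` colors: every hyperedge
has exactly one vertex whose color is maximum on the hyperedge. -/
def IsUMColoring {V : Type} {k : ℕ} (E : Set (Finset V)) (C : V → Fin k) : Prop :=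
  ∀ e ∈ E, ∃! v, v ∈ e ∧ ∀ u ∈ e, C u ≤ C v

/-- An odd coloring of a hyperedge set `E` with `k` colors: every hyperedge
has some color occurring on an odd number of its vertices. -/
def IsOddColoring {V : Type} {k : ℕ} (E : Set (Finset V)) (C : V → Fin k) : Prop :=
  ∀ e ∈ E, ∃ c : Fin k, Odd ((e.filter fun v => C v = c).card)

/-- The conflict-free chromatic number of a hypergraph. -/
def cfNum {V : Type} (E : Set (Finset V)) : ℕ :=
  sInf {k | ∃ C : V → Fin k, IsCFColoring E C}

/-- The unique-maximum chromatic number of a hypergraph. -/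
def umNum {V : Type} (E : Set (Finset V)) : ℕ :=
  sInf {k | ∃ C : V → Fin k, IsUMColoring E C}

/-- The odd chromatic number of a hypergraph. -/
def oddNum {V : Type} (E : Set (Finset V)) : ℕ :=
  sInf {k | ∃ C : V → Fin k, IsOddColoring E C}

/-- The hyperedges of the path hypergraph of a graph `G`: vertex sets of simple paths. -/
def pathEdges {V : Type} (G : SimpleGraph V) : Set (Finset V) :=
  {S | ∃ (u v : V) (p : G.Walk u v), p.IsPath ∧ S = p.support.toFinset}

/-- Unique-maximum chromatic number of a graph with respect to paths. -/
def UM {V : Type} (G : SimpleGraph V) : ℕ := umNum (pathEdges G)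

/-- Conflict-free chromatic number of a graph with respect to paths. -/
def CF {V : Type} (G : SimpleGraph V) : ℕ := cfNum (pathEdges G)

/-- Odd chromatic number of a graph with respect to paths. -/
def ODD {V : Type} (G : SimpleGraph V) : ℕ := oddNum (pathEdges G)

/-- The complete binary tree with `d` levels (`2^d - 1` vertices), with vertices the
binary strings of length `< d`; each vertex `l` is adjacent to its children `b :: l`. -/
def binaryTree (d : ℕ) : SimpleGraph {l : List Bool // l.length < d} :=
  SimpleGraph.fromRel fun a b => ∃ bit : Bool, b.1 = bit :: a.1

/-- `IsSubdivPaths G H f P` : the data `f` (branch vertices) and `P` (a path of `H` for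
every edge of `G`) witness that `H` contains a subdivision of `G` as a subgraph:
`f` is injective, the paths are internally disjoint from each other and from the
branch vertices. -/
def IsSubdivPaths {V W : Type} (G : SimpleGraph V) (H : SimpleGraph W) (f : V → W)
    (P : ∀ u v, G.Adj u v → H.Walk (f u) (f v)) : Prop :=
  Function.Injective f ∧
  (∀ u v (h : G.Adj u v), (P u v h).IsPath) ∧
  (∀ u v (h : G.Adj u v), P v u h.symm = (P u v h).reverse) ∧
  (∀ u v (h : G.Adj u v) (w : W),
    w ∈ (P u v h).support → w ≠ f u → w ≠ f v → w ∉ Set.range f) ∧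
  (∀ u v (h : G.Adj u v) (u' v' : V) (h' : G.Adj u' v'), s(u, v) ≠ s(u', v') →
    ∀ w : W, w ∈ (P u v h).support → w ∈ (P u' v' h').support → w ∈ Set.range f)

/-- `H` contains a subdivision of `G` as a subgraph. -/
def ContainsSubdivision {V W : Type} (G : SimpleGraph V) (H : SimpleGraph W) : Prop :=
  ∃ f P, IsSubdivPaths G H f P

/-- `IsSubdivision G H f P` : the data `f`, `P` witness that `H` is (exactly) a
subdivision of `G`: additionally to `IsSubdivPaths`, every vertex of `H` and every
edge of `H` comes from some path replacing an edge of `G`, or is a branch vertex. -/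
def IsSubdivision {V W : Type} (G : SimpleGraph V) (H : SimpleGraph W) (f : V → W)
    (P : ∀ u v, G.Adj u v → H.Walk (f u) (f v)) : Prop :=
  IsSubdivPaths G H f P ∧
  (∀ w : W, w ∈ Set.range f ∨ ∃ u v h, w ∈ (P u v h).support) ∧
  (∀ a b : W, H.Adj a b ↔ ∃ u v h, s(a, b) ∈ (P u v h).edges)

/-- `H` is a subdivision of `G`. -/
def Subdivides {V W : Type} (G : SimpleGraph V) (H : SimpleGraph W) : Prop :=
  ∃ f P, IsSubdivision G H f P

/-- A graph is UM-critical if every proper subgraph has strictly smaller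
unique-maximum chromatic number with respect to paths. -/
def UMCritical {V : Type} (G : SimpleGraph V) : Prop :=
  ∀ G' : G.Subgraph, G' ≠ ⊤ → UM G'.coe < UM G

/-- A graph is `k`-UM-critical if it is UM-critical and its UM number equals `k`. -/
def UMCriticalK {V : Type} (k : ℕ) (G : SimpleGraph V) : Prop :=
  UMCritical G ∧ UM G = k

/-- A family of sequences of distinct elements of `Fin n` is prefix set-free if no
nonempty prefix of a member (including the member itself) has the same underlying set
as another member. -/
def IsPSF {n : ℕ} (F : Finset (List (Fin n))) : Prop :=
  (∀ l ∈ F, l.Nodup) ∧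
  ∀ A ∈ F, ∀ B ∈ F, A ≠ B →
    ∀ p : List (Fin n), p ≠ [] → p <+: A → p.toFinset ≠ B.toFinset

/-- A `[k,d,n]` prefix set-free family: ground set `Fin n`, every sequence of length at
least `k`, and at least `2^d` members. -/
def IsPSFFamily (k d n : ℕ) (F : Finset (List (Fin n))) : Prop :=
  IsPSF F ∧ (∀ l ∈ F, k ≤ l.length) ∧ 2 ^ d ≤ F.card

set_option linter.unusedSectionVars false
set_option linter.unusedVariables false
namespace UMwork

variable {V : Type} [Fintype V] (T : SimpleGraph V)

/-- `S`-local unique-maximum colorability with `k` colors (ℕ-valued). -/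
def UMok (S : Set V) (k : ℕ) : Prop :=
  ∃ C : V → ℕ, (∀ v ∈ S, C v < k) ∧
    ∀ ⦃u w : V⦄ (p : T.Walk u w), p.IsPath → (∀ x ∈ p.support, x ∈ S) →
      ∃! v, v ∈ p.support ∧ ∀ x ∈ p.support, C x ≤ C v

def ums (S : Set V) : ℕ := sInf {k | UMok T S k}

variable {T}

lemma UMok.mono_k {S : Set V} {k k' : ℕ} (h : UMok T S k) (hk : k ≤ k') : UMok T S k' := by
  obtain ⟨C, hb, hv⟩ := h
  exact ⟨C, fun v hv' => lt_of_lt_of_le (hb v hv') hk, hv⟩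

lemma umok_card (S : Set V) : UMok T S (Fintype.card V) := by
  classical
  refine ⟨fun v => (Fintype.equivFin V v : ℕ), fun v _ => (Fintype.equivFin V v).is_lt, ?_⟩
  intro u w p hp hs
  obtain ⟨v, hv, hmax⟩ := p.support.toFinset.exists_max_image
    (fun x => (Fintype.equivFin V x : ℕ)) ⟨u, by simp⟩
  refine ⟨v, ⟨List.mem_toFinset.mp hv, fun x hx => hmax x (List.mem_toFinset.mpr hx)⟩, ?_⟩
  rintro y ⟨hy, hymax⟩
  have h1 : ((Fintype.equivFin V) v : ℕ) ≤ (Fintype.equivFin V) y :=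
    hymax v (List.mem_toFinset.mp hv)
  have h2 : ((Fintype.equivFin V) y : ℕ) ≤ (Fintype.equivFin V) v := hmax y (by simpa using hy)
  have : (Fintype.equivFin V) y = (Fintype.equivFin V) v := Fin.le_antisymm h2 h1
  exact (Fintype.equivFin V).injective this

lemma umok_nonempty (S : Set V) : {k | UMok T S k}.Nonempty := ⟨_, umok_card S⟩

lemma umok_ums (S : Set V) : UMok T S (ums T S) := Nat.sInf_mem (umok_nonempty S)

lemma ums_le_iff {S : Set V} {k : ℕ} : ums T S ≤ k ↔ UMok T S k :=
  ⟨fun h => (umok_ums S).mono_k h, fun h => Nat.sInf_le h⟩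

lemma lt_ums_iff {S : Set V} {k : ℕ} : k < ums T S ↔ ¬ UMok T S k := by
  rw [← not_le, not_iff_not, ums_le_iff]

lemma ums_mono {S S' : Set V} (h : S ⊆ S') : ums T S ≤ ums T S' := by
  rw [ums_le_iff]
  obtain ⟨C, hb, hv⟩ := umok_ums (T := T) S'
  exact ⟨C, fun v hv' => hb v (h hv'), fun u w p hp hs => hv p hp fun x hx => h (hs x hx)⟩

lemma umok_zero_iff {S : Set V} : UMok T S 0 ↔ S = ∅ := by
  constructor
  · rintro ⟨C, hb, -⟩
    by_contra h
    obtain ⟨v, hv⟩ := Set.nonempty_iff_ne_empty.mpr h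
    exact absurd (hb v hv) (by omega)
  · rintro rfl
    refine ⟨fun _ => 0, by simp, ?_⟩
    intro u w p hp hs
    exact absurd (hs u p.start_mem_support) (by simp)

lemma ums_empty : ums T (∅ : Set V) = 0 :=
  Nat.le_zero.mp (ums_le_iff.mpr (umok_zero_iff.mpr rfl))

lemma nonempty_of_ums_pos {S : Set V} (h : 0 < ums T S) : S.Nonempty := by
  rw [Set.nonempty_iff_ne_empty]
  rintro rfl
  simp [ums_empty] at h

/-- Reachability within a vertex set `S` (by walks whose support stays in `S`). -/
def reachIn (T : SimpleGraph V) (S : Set V) (u w : V) : Prop :=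
  ∃ p : T.Walk u w, ∀ x ∈ p.support, x ∈ S

lemma reachIn.refl {S : Set V} {u : V} (h : u ∈ S) : reachIn T S u u :=
  ⟨SimpleGraph.Walk.nil, by simpa using h⟩

lemma reachIn.symm {S : Set V} {u w : V} (h : reachIn T S u w) : reachIn T S w u := by
  obtain ⟨p, hp⟩ := h
  exact ⟨p.reverse, fun x hx => hp x (by simpa using hx)⟩

lemma reachIn.trans {S : Set V} {u w x : V} (h : reachIn T S u w) (h' : reachIn T S w x) :
    reachIn T S u x := by
  obtain ⟨p, hp⟩ := h; obtain ⟨q, hq⟩ := h'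
  refine ⟨p.append q, fun y hy => ?_⟩
  rcases (SimpleGraph.Walk.mem_support_append_iff _ _).mp hy with h | h
  exacts [hp y h, hq y h]

lemma reachIn.mono {S S' : Set V} {u w : V} (hS : S ⊆ S') (h : reachIn T S u w) :
    reachIn T S' u w := by
  obtain ⟨p, hp⟩ := h; exact ⟨p, fun x hx => hS (hp x hx)⟩

lemma reachIn.mem_left {S : Set V} {u w : V} (h : reachIn T S u w) : u ∈ S := by
  obtain ⟨p, hp⟩ := h; exact hp u p.start_mem_support

lemma reachIn.mem_right {S : Set V} {u w : V} (h : reachIn T S u w) : w ∈ S := by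
  obtain ⟨p, hp⟩ := h; exact hp w p.end_mem_support

lemma reachIn_adj {S : Set V} {u w : V} (h : T.Adj u w) (hu : u ∈ S) (hw : w ∈ S) :
    reachIn T S u w :=
  ⟨SimpleGraph.Walk.cons h SimpleGraph.Walk.nil, by
    intro x hx; simp at hx; rcases hx with rfl | rfl; exacts [hu, hw]⟩

/-- The `reachIn`-component of `u` inside `S`. -/
def compIn (T : SimpleGraph V) (S : Set V) (u : V) : Set V := {w | reachIn T S u w}

lemma compIn_subset {S : Set V} {u : V} : compIn T S u ⊆ S := fun _ h => reachIn.mem_right h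

lemma mem_compIn_self {S : Set V} {u : V} (h : u ∈ S) : u ∈ compIn T S u := reachIn.refl h

lemma compIn_eq_of_mem {S : Set V} {u w : V} (h : w ∈ compIn T S u) :
    compIn T S w = compIn T S u := by
  ext x
  exact ⟨fun hx => reachIn.trans (h : reachIn T S u w) hx,
         fun hx => reachIn.trans (reachIn.symm (h : reachIn T S u w)) hx⟩

/-- A canonical optimal coloring of a set. -/
def optC (T : SimpleGraph V) (S : Set V) : V → ℕ := (umok_ums (T := T) S).choose

lemma optC_bound {S : Set V} : ∀ v ∈ S, optC T S v < ums T S :=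
  (umok_ums (T := T) S).choose_spec.1

lemma optC_valid {S : Set V} : ∀ ⦃u w : V⦄ (p : T.Walk u w), p.IsPath →
    (∀ x ∈ p.support, x ∈ S) →
    ∃! v, v ∈ p.support ∧ ∀ x ∈ p.support, optC T S x ≤ optC T S v :=
  (umok_ums (T := T) S).choose_spec.2

/-- Transfer an `∃!`-unique-max across colorings that agree on the support. -/
lemma umax_congr {C C' : V → ℕ} {u w : V} {p : T.Walk u w}
    (h : ∀ x ∈ p.support, C x = C' x)
    (he : ∃! v, v ∈ p.support ∧ ∀ x ∈ p.support, C x ≤ C v) :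
    ∃! v, v ∈ p.support ∧ ∀ x ∈ p.support, C' x ≤ C' v := by
  refine (existsUnique_congr (fun v => ?_)).mp he
  constructor
  · rintro ⟨hv, hm⟩
    exact ⟨hv, fun x hx => by rw [← h x hx, ← h v hv]; exact hm x hx⟩
  · rintro ⟨hv, hm⟩
    exact ⟨hv, fun x hx => by rw [h x hx, h v hv]; exact hm x hx⟩

/-- Components combine: if every `reachIn`-component of `S` has `ums ≤ m`, then `ums S ≤ m`. -/
lemma ums_le_of_comps {S : Set V} {m : ℕ} (h : ∀ u ∈ S, ums T (compIn T S u) ≤ m) :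
    ums T S ≤ m := by
  rw [ums_le_iff]
  refine ⟨fun v => if v ∈ S then optC T (compIn T S v) v else 0, ?_, ?_⟩
  · intro v hv
    simp only [if_pos hv]
    exact lt_of_lt_of_le (optC_bound v (mem_compIn_self hv)) (h v hv)
  · intro u w p hp hs
    have hsupp : ∀ x ∈ p.support, x ∈ compIn T S u := by
      intro x hx
      exact ⟨p.takeUntil x hx, fun y hy => hs y (p.support_takeUntil_subset hx hy)⟩
    have := optC_valid (T := T) (S := compIn T S u) p hp hsupp
    refine umax_congr (fun x hx => ?_) this
    have hxS : x ∈ S := hs x hx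
    rw [if_pos hxS, compIn_eq_of_mem (hsupp x hx)]

/-- Vertex bound: `ums S ≤ 1 + ums (S \ {v})`. -/
lemma ums_le_one_add_del {S : Set V} (v : V) : ums T S ≤ 1 + ums T (S \ {v}) := by
  classical
  set m := ums T (S \ {v}) with hm
  rw [ums_le_iff]
  refine ⟨fun w => if w = v then m else if w ∈ S \ {v} then optC T (S \ {v}) w else 0, ?_, ?_⟩
  · intro w hw
    by_cases h : w = v
    · simp only [if_pos h]; omega
    · have hw' : w ∈ S \ {v} := ⟨hw, by simp [h]⟩
      simp only [if_neg h, if_pos hw']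
      have := optC_bound (T := T) w hw'
      omega
  · intro a b p hp hs
    by_cases hv : v ∈ p.support
    · refine ⟨v, ⟨hv, fun x hx => ?_⟩, ?_⟩
      · by_cases h : x = v
        · simp [h]
        · have hx' : x ∈ S \ {v} := ⟨hs x hx, by simp [h]⟩
          simp only [if_neg h, if_pos hx', if_pos rfl]
          exact le_of_lt (optC_bound x hx')
      · rintro y ⟨hy, hymax⟩
        by_contra hne
        have hy' : y ∈ S \ {v} := ⟨hs y hy, by simp [hne]⟩
        have h1 := hymax v hv
        simp only [if_pos rfl, if_neg hne, if_pos hy'] at h1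
        exact absurd (optC_bound y hy') (not_lt.mpr h1)
    · have hsupp : ∀ x ∈ p.support, x ∈ S \ {v} :=
        fun x hx => ⟨hs x hx, fun h => hv ((Set.mem_singleton_iff.mp h) ▸ hx)⟩
      refine umax_congr (fun x hx => ?_) (optC_valid p hp hsupp)
      have hxv : ¬ x = v := fun h => hv (h ▸ hx)
      rw [if_neg hxv, if_pos (hsupp x hx)]

/-- Two disjoint "heavy" pieces in a connected ambient set force one more color. -/
lemma not_umok_of_heavy_pair {S A B : Set V} {m : ℕ} (hm : 1 ≤ m)
    (hA : A ⊆ S) (hB : B ⊆ S) (hd : Disjoint A B)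
    (hums_A : m ≤ ums T A) (hums_B : m ≤ ums T B)
    (hreach : ∀ a ∈ A, ∀ b ∈ B, reachIn T S a b) :
    ¬ UMok T S m := by
  rintro ⟨C, hb, hv⟩
  have top : ∀ X : Set V, X ⊆ S → m ≤ ums T X → ∃ x ∈ X, C x = m - 1 := by
    intro X hXS hX
    by_contra h
    push_neg at h
    have : UMok T X (m - 1) := by
      refine ⟨C, fun x hx => ?_, fun u w p hp hs => hv p hp fun x hx => hXS (hs x hx)⟩
      have h1 := hb x (hXS hx)
      have h2 := h x hx
      omega
    have := ums_le_iff.mpr this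
    omega
  obtain ⟨s, hsA, hCs⟩ := top A hA hums_A
  obtain ⟨t, htB, hCt⟩ := top B hB hums_B
  obtain ⟨q, hq⟩ := hreach s hsA t htB
  have hsupp : ∀ x ∈ q.bypass.support, x ∈ S :=
    fun x hx => hq x (q.support_bypass_subset hx)
  obtain ⟨z, -, huniq⟩ := hv q.bypass q.bypass_isPath hsupp
  have hmax : ∀ y, C y = m - 1 → y ∈ q.bypass.support →
      (y ∈ q.bypass.support ∧ ∀ x ∈ q.bypass.support, C x ≤ C y) := by
    intro y hy hymem
    refine ⟨hymem, fun x hx => ?_⟩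
    have := hb x (hsupp x hx)
    omega
  have hs' := huniq s (hmax s hCs q.bypass.start_mem_support)
  have ht' := huniq t (hmax t hCt q.bypass.end_mem_support)
  have : s = t := hs'.trans ht'.symm
  exact Set.disjoint_left.mp hd (this ▸ hsA) htB

/-- An adjacent pair inside `S` forces two colors. -/
lemma two_le_ums_of_adj {S : Set V} {x y : V} (h : T.Adj x y) (hx : x ∈ S) (hy : y ∈ S) :
    2 ≤ ums T S := by
  rw [show (2:ℕ) = 1 + 1 by rfl, ← Nat.lt_iff_add_one_le, lt_ums_iff]
  rintro ⟨C, hb, hv⟩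
  have hp : (SimpleGraph.Walk.cons h SimpleGraph.Walk.nil).IsPath := by
    simp [SimpleGraph.Walk.isPath_def, h.ne]
  obtain ⟨z, -, huniq⟩ := hv _ hp (by
    intro a ha; simp at ha; rcases ha with rfl | rfl; exacts [hx, hy])
  have hCx : C x = 0 := by have := hb x hx; omega
  have hCy : C y = 0 := by have := hb y hy; omega
  have h1 := huniq x ⟨by simp, by intro a ha; simp at ha; rcases ha with rfl | rfl <;> omega⟩
  have h2 := huniq y ⟨by simp, by intro a ha; simp at ha; rcases ha with rfl | rfl <;> omega⟩
  exact h.ne (h1.trans h2.symm)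
/-- Set-criticality of a vertex set inside the ambient graph. -/
def CritS (T : SimpleGraph V) (S : Set V) (j : ℕ) : Prop :=
  ums T S = j ∧ ∀ S' : Set V, S' ⊂ S → ums T S' < j

lemma CritS.nonempty {S : Set V} {j : ℕ} (h : CritS T S j) (hj : 1 ≤ j) : S.Nonempty :=
  nonempty_of_ums_pos (by rw [h.1]; omega)

lemma CritS.conn {S : Set V} {j : ℕ} (h : CritS T S j) (hj : 1 ≤ j) :
    ∀ u ∈ S, ∀ w ∈ S, reachIn T S u w := by
  intro u hu w hw
  by_contra hr
  have hcomp : ∀ x ∈ S, compIn T S x ≠ S := by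
    intro x hx heq
    have h1 : reachIn T S x u := by rw [← heq] at hu; exact hu
    have h2 : reachIn T S x w := by rw [← heq] at hw; exact hw
    exact hr (h1.symm.trans h2)
  have : ums T S ≤ j - 1 := by
    refine ums_le_of_comps fun x hx => ?_
    have := h.2 (compIn T S x) (ssubset_of_subset_of_ne compIn_subset (hcomp x hx))
    omega
  rw [h.1] at this; omega

/-- In a tree, the two sides of an edge are disjoint. -/
lemma tree_sides_disjoint (hT : T.IsTree) {S : Set V} {a b : V} (hab : T.Adj a b) :
    Disjoint (compIn T (S \ {a}) b) (compIn T (S \ {b}) a) := by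
  rw [Set.disjoint_left]
  rintro w ⟨r1, hr1⟩ ⟨r2, hr2⟩
  have hbr2 : b ∉ r2.support := fun h => (hr2 b h).2 rfl
  have har1 : a ∉ r1.support := fun h => (hr1 a h).2 rfl
  set q0 : T.Walk a b := r2.append r1.reverse with hq0
  have hedge : s(a, b) ∉ q0.edges := by
    rw [hq0, SimpleGraph.Walk.edges_append]
    rintro h
    rcases List.mem_append.mp h with h | h
    · exact hbr2 (r2.snd_mem_support_of_mem_edges h)
    · rw [SimpleGraph.Walk.edges_reverse, List.mem_reverse] at h
      exact har1 (r1.fst_mem_support_of_mem_edges h)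
  have hpq : q0.bypass.IsPath := q0.bypass_isPath
  have hsingle : (SimpleGraph.Walk.cons hab SimpleGraph.Walk.nil).IsPath := by
    simp [SimpleGraph.Walk.isPath_def, hab.ne]
  have := hT.IsAcyclic.path_unique ⟨q0.bypass, hpq⟩ ⟨_, hsingle⟩
  have he : s(a, b) ∈ q0.bypass.edges := by
    rw [show q0.bypass = SimpleGraph.Walk.cons hab SimpleGraph.Walk.nil from
      congrArg Subtype.val this]
    simp
  exact hedge (q0.edges_bypass_subset he)

/-- Extract the first step of a nontrivial path. -/
lemma walk_first_step {S : Set V} {v u : V} (q : T.Walk v u) (hq : q.IsPath) (hne : v ≠ u)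
    (hS : ∀ x ∈ q.support, x ∈ S) :
    ∃ (u' : V) (r : T.Walk u' u), T.Adj v u' ∧ ∀ x ∈ r.support, x ∈ S \ {v} := by
  cases q with
  | nil => exact absurd rfl hne
  | cons h r =>
    rw [SimpleGraph.Walk.cons_isPath_iff] at hq
    refine ⟨_, r, h, fun x hx => ⟨hS x (by simp [hx]), ?_⟩⟩
    rintro rfl
    exact hq.2 hx

/-- Every vertex of a connected critical set has a neighbor whose component is "heavy". -/
lemma exists_heavy_nbr {S : Set V} {j : ℕ} (hcrit : CritS T S j) (hj : 2 ≤ j)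
    {v : V} (hv : v ∈ S) :
    ∃ u, T.Adj v u ∧ u ∈ S ∧ j - 1 ≤ ums T (compIn T (S \ {v}) u) := by
  by_contra hcon
  push_neg at hcon
  have hlight : ∀ u ∈ S \ {v}, ums T (compIn T (S \ {v}) u) ≤ j - 2 := by
    intro u hu
    have hne : v ≠ u := fun h => hu.2 (h ▸ rfl)
    obtain ⟨w, hw⟩ := hcrit.conn (by omega) v hv u hu.1
    obtain ⟨u', r, hadj, hr⟩ := walk_first_step w.bypass w.bypass_isPath hne
      (fun x hx => hw x (w.support_bypass_subset hx))
    have humem : u ∈ compIn T (S \ {v}) u' := ⟨r, hr⟩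
    have hu'S : u' ∈ S := (reachIn.mem_left (reachIn.refl (hr u' r.start_mem_support) :
      reachIn T (S \ {v}) u' u')).1
    have := hcon u' hadj hu'S
    rw [← compIn_eq_of_mem humem] at this
    omega
  have h1 : ums T (S \ {v}) ≤ j - 2 := ums_le_of_comps hlight
  have h2 := ums_le_one_add_del (T := T) (S := S) v
  rw [hcrit.1] at h2
  omega

/-- There is an edge whose two sides are both heavy. -/
lemma exists_heavy_edge (hT : T.IsTree) {S : Set V} {j : ℕ}
    (hcrit : CritS T S j) (hj : 2 ≤ j) :
    ∃ a b, T.Adj a b ∧ a ∈ S ∧ b ∈ S ∧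
      j - 1 ≤ ums T (compIn T (S \ {a}) b) ∧ j - 1 ≤ ums T (compIn T (S \ {b}) a) := by
  classical
  set P : V → V → Prop := fun v u =>
    T.Adj v u ∧ v ∈ S ∧ u ∈ S ∧ j - 1 ≤ ums T (compIn T (S \ {v}) u) with hP
  set N : Set ℕ := {n | ∃ v u, P v u ∧ (compIn T (S \ {v}) u).ncard = n} with hN
  have hPne : N.Nonempty := by
    obtain ⟨v0, hv0⟩ := hcrit.nonempty (by omega)
    obtain ⟨u, h1, h2, h3⟩ := exists_heavy_nbr hcrit hj hv0
    exact ⟨_, v0, u, ⟨h1, hv0, h2, h3⟩, rfl⟩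
  have hmin := Nat.sInf_mem hPne
  obtain ⟨a, b, ⟨hab, haS, hbS, hheavy⟩, hcard⟩ := hmin
  refine ⟨a, b, hab, haS, hbS, hheavy, ?_⟩
  by_contra hlight
  obtain ⟨u', hadj, hu'S, hheavy'⟩ := exists_heavy_nbr hcrit hj hbS
  have hu'a : u' ≠ a := by
    rintro rfl
    exact hlight hheavy'
  -- show compIn T (S \ {b}) u' ⊆ compIn T (S \ {a}) b \ {b}, unless a on a walk
  by_cases hacase : ∃ w ∈ compIn T (S \ {b}) u', ∃ (r : T.Walk u' w),
      (∀ x ∈ r.support, x ∈ S \ {b}) ∧ a ∈ r.support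
  · obtain ⟨w, hw, r, hr, har⟩ := hacase
    have : a ∈ compIn T (S \ {b}) u' :=
      ⟨r.takeUntil a har, fun x hx => hr x (r.support_takeUntil_subset har hx)⟩
    rw [← compIn_eq_of_mem this] at hheavy'
    exact hlight hheavy'
  · push_neg at hacase
    have hsub : compIn T (S \ {b}) u' ⊆ compIn T (S \ {a}) b \ {b} := by
      rintro w ⟨r, hr⟩
      have har : a ∉ r.support := fun h => hacase w ⟨r, hr⟩ r hr h
      refine ⟨⟨SimpleGraph.Walk.cons hadj r, ?_⟩, fun h => (hr w r.end_mem_support).2 h⟩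
      intro x hx
      rw [SimpleGraph.Walk.support_cons, List.mem_cons] at hx
      rcases hx with rfl | hx
      · exact ⟨hbS, fun h => hab.ne' (Set.mem_singleton_iff.mp h)⟩
      · exact ⟨(hr x hx).1, fun h => har ((Set.mem_singleton_iff.mp h) ▸ hx)⟩
    have hssub : compIn T (S \ {b}) u' ⊂ compIn T (S \ {a}) b := by
      refine ssubset_of_subset_of_ne (hsub.trans Set.diff_subset) (fun heq => ?_)
      have : b ∈ compIn T (S \ {b}) u' := by
        rw [heq]; exact mem_compIn_self ⟨hbS, fun h => hab.ne' (Set.mem_singleton_iff.mp h)⟩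
      exact (compIn_subset this).2 rfl
    have hlt : (compIn T (S \ {b}) u').ncard < (compIn T (S \ {a}) b).ncard :=
      Set.ncard_lt_ncard hssub (Set.toFinite _)
    have hmem : (compIn T (S \ {b}) u').ncard ∈ N :=
      ⟨b, u', ⟨hadj, hbS, hu'S, hheavy'⟩, rfl⟩
    have hle := Nat.sInf_le hmem
    omega
/-- A minimal-cardinality heavy subset of `K`. -/
lemma exists_min_heavy {K : Set V} {m : ℕ} (hm : m ≤ ums T K) :
    ∃ A, A ⊆ K ∧ m ≤ ums T A ∧ ∀ X, X ⊆ K → m ≤ ums T X → A.ncard ≤ X.ncard := by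
  classical
  set N : Set ℕ := {n | ∃ X, X ⊆ K ∧ m ≤ ums T X ∧ X.ncard = n} with hN
  have hne : N.Nonempty := ⟨K.ncard, K, le_refl _, hm, rfl⟩
  have hmem := Nat.sInf_mem hne
  obtain ⟨A, hAK, hAm, hAcard⟩ := hmem
  refine ⟨A, hAK, hAm, fun X hXK hXm => ?_⟩
  have : X.ncard ∈ N := ⟨X, hXK, hXm, rfl⟩
  have := Nat.sInf_le this
  omega

/-- Extract the last step of a walk of positive length. -/
lemma walk_snoc {s t : V} (q : T.Walk s t) (hq : 1 ≤ q.length) :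
    ∃ (x : V) (r : T.Walk s x), T.Adj x t ∧ (∀ y ∈ r.support, y ∈ q.support) ∧
      r.length + 1 = q.length := by
  induction q with
  | nil => simp at hq
  | @cons u v w h q' ih =>
    rcases Nat.eq_zero_or_pos q'.length with h0 | hpos
    · have : v = w := SimpleGraph.Walk.eq_of_length_eq_zero h0
      subst this
      exact ⟨u, SimpleGraph.Walk.nil, h, by simp, by simp [h0]⟩
    · obtain ⟨x, r, hadj, hsup, hlen⟩ := ih hpos
      refine ⟨x, SimpleGraph.Walk.cons h r, hadj, ?_, by simp [← hlen]⟩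
      intro y hy
      rw [SimpleGraph.Walk.support_cons, List.mem_cons] at hy ⊢
      rcases hy with rfl | hy
      · exact Or.inl rfl
      · exact Or.inr (hsup y hy)

/-- A walk of length one connects adjacent vertices with two-element support. -/
lemma walk_length_one {s t : V} (q : T.Walk s t) (hq : q.length = 1) :
    T.Adj s t ∧ q.support = [s, t] := by
  cases q with
  | nil => simp at hq
  | @cons _ v _ h q' =>
    have h0 : q'.length = 0 := by simpa using hq
    have : v = t := SimpleGraph.Walk.eq_of_length_eq_zero h0
    subst this
    cases q' with
    | nil => exact ⟨h, by simp⟩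
    | cons h' q'' => simp at h0

/-- Pendant-leaf property, the core structural lemma. -/
def L7c (T : SimpleGraph V) (S : Set V) (j : ℕ) : Prop :=
  ∀ t0 ∈ S, ∀ x, x ∉ S → T.Adj x t0 →
    ∃ ℓ ∈ S, ℓ ≠ t0 ∧ j ≤ ums T ((S \ {ℓ}) ∪ {x}) ∧
      ∀ b ∈ S \ {ℓ}, reachIn T (S \ {ℓ}) t0 b

/-- Decomposition of a critical set into two critical halves joined by an edge. -/
def DecompP (T : SimpleGraph V) (S : Set V) (j : ℕ) : Prop :=
  ∃ D1 D2 d1 d2, S = D1 ∪ D2 ∧ Disjoint D1 D2 ∧ d1 ∈ D1 ∧ d2 ∈ D2 ∧ T.Adj d1 d2 ∧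
    CritS T D1 (j-1) ∧ CritS T D2 (j-1)

def Grand (T : SimpleGraph V) (j : ℕ) : Prop :=
  ∀ S : Set V, CritS T S j → S.ncard = 2^(j-1) ∧ (2 ≤ j → DecompP T S j ∧ L7c T S j)

/-- The main engine: cardinality and decomposition for critical sets. -/
lemma engine (hT : T.IsTree) {j : ℕ} (hj : 2 ≤ j)
    (IH : ∀ i, 1 ≤ i → i < j → Grand T i)
    {S : Set V} (hcrit : CritS T S j) :
    S.ncard = 2^(j-1) ∧ DecompP T S j := by
  classical
  obtain ⟨a, b, hab, haS, hbS, hheavyB, hheavyA⟩ := exists_heavy_edge hT hcrit hj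
  set KB := compIn T (S \ {a}) b with hKBdef
  set KA := compIn T (S \ {b}) a with hKAdef
  have hKAS : KA ⊂ S := by
    rw [Set.ssubset_def]
    exact ⟨(compIn_subset (T := T)).trans Set.diff_subset,
      fun hsup => (compIn_subset (hsup hbS)).2 rfl⟩
  have hKBS : KB ⊂ S := by
    rw [Set.ssubset_def]
    exact ⟨(compIn_subset (T := T)).trans Set.diff_subset,
      fun hsup => (compIn_subset (hsup haS)).2 rfl⟩
  have hKAle : ums T KA ≤ j - 1 := by have := hcrit.2 KA hKAS; omega
  have hKBle : ums T KB ≤ j - 1 := by have := hcrit.2 KB hKBS; omega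
  -- minimal heavy subsets
  obtain ⟨SA, hSAK, hSAm, hSAmin⟩ := exists_min_heavy (T := T) (K := KA) (m := j-1) hheavyA
  obtain ⟨SB, hSBK, hSBm, hSBmin⟩ := exists_min_heavy (T := T) (K := KB) (m := j-1) hheavyB
  have critSA : CritS T SA (j-1) := by
    refine ⟨le_antisymm ((ums_mono hSAK).trans hKAle) hSAm, fun S' hS' => ?_⟩
    by_contra hge
    push_neg at hge
    have h1 := hSAmin S' (hS'.1.trans hSAK) hge
    have h2 := Set.ncard_lt_ncard hS' (Set.toFinite _)
    omega
  have critSB : CritS T SB (j-1) := by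
    refine ⟨le_antisymm ((ums_mono hSBK).trans hKBle) hSBm, fun S' hS' => ?_⟩
    by_contra hge
    push_neg at hge
    have h1 := hSBmin S' (hS'.1.trans hSBK) hge
    have h2 := Set.ncard_lt_ncard hS' (Set.toFinite _)
    omega
  have hj1 : (1:ℕ) ≤ j - 1 := by omega
  have hSAS : SA ⊆ S := hSAK.trans (hKAS.1)
  have hSBS : SB ⊆ S := hSBK.trans (hKBS.1)
  have hdAB : Disjoint SA SB := ((tree_sides_disjoint hT hab).symm).mono hSAK hSBK
  have cardSA : SA.ncard = 2^(j-2) := by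
    have := (IH (j-1) hj1 (by omega) SA critSA).1
    rwa [show j - 1 - 1 = j - 2 by omega] at this
  have cardSB : SB.ncard = 2^(j-2) := by
    have := (IH (j-1) hj1 (by omega) SB critSB).1
    rwa [show j - 1 - 1 = j - 2 by omega] at this
  -- minimal connector walk
  set W : Set ℕ := {n | ∃ s t, s ∈ SA ∧ t ∈ SB ∧
    ∃ q : T.Walk s t, (∀ x ∈ q.support, x ∈ S) ∧ q.length = n} with hW
  have hWne : W.Nonempty := by
    obtain ⟨s', hs'⟩ := critSA.nonempty hj1
    obtain ⟨t', ht'⟩ := critSB.nonempty hj1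
    obtain ⟨q, hq⟩ := hcrit.conn (by omega) s' (hSAS hs') t' (hSBS ht')
    exact ⟨q.length, s', t', hs', ht', q, hq, rfl⟩
  have hWmem := Nat.sInf_mem hWne
  obtain ⟨s0, t0, hs0, ht0, q, hqS, hqlen⟩ := hWmem
  have hst : s0 ≠ t0 := fun h => Set.disjoint_left.mp hdAB hs0 (h ▸ ht0)
  have hlen1 : 1 ≤ q.length := by
    rcases Nat.eq_zero_or_pos q.length with h0 | h
    · exact absurd (SimpleGraph.Walk.eq_of_length_eq_zero h0) hst
    · exact h
  -- no internal vertex of the minimal walk is in SA or SB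
  have f1 : ∀ w ∈ q.support, w ∈ SA → w = s0 := by
    intro w hw hwA
    by_contra hne
    have hspec := congrArg SimpleGraph.Walk.length (q.take_spec hw)
    rw [SimpleGraph.Walk.length_append] at hspec
    have htl : (q.takeUntil w hw).length ≠ 0 := fun h0 =>
      hne (SimpleGraph.Walk.eq_of_length_eq_zero h0).symm
    have : (q.dropUntil w hw).length ∈ W :=
      ⟨w, t0, hwA, ht0, q.dropUntil w hw,
        fun x hx => hqS x (q.support_dropUntil_subset hw hx), rfl⟩
    have := Nat.sInf_le this
    omega
  have f2 : ∀ w ∈ q.support, w ∈ SB → w = t0 := by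
    intro w hw hwB
    by_contra hne
    have hspec := congrArg SimpleGraph.Walk.length (q.take_spec hw)
    rw [SimpleGraph.Walk.length_append] at hspec
    have htl : (q.dropUntil w hw).length ≠ 0 := fun h0 =>
      hne (SimpleGraph.Walk.eq_of_length_eq_zero h0)
    have : (q.takeUntil w hw).length ∈ W :=
      ⟨s0, w, hs0, hwB, q.takeUntil w hw,
        fun x hx => hqS x (q.support_takeUntil_subset hw hx), rfl⟩
    have := Nat.sInf_le this
    omega
  -- every vertex of S is in SA ∪ SB ∪ support q
  have f4 : ∀ y ∈ S, y ∉ SA → y ∉ SB → y ∈ q.support := by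
    intro y hyS hyA hyB
    by_contra hyq
    have hSam : S \ {y} ⊂ S := by
      rw [Set.ssubset_def]
      exact ⟨Set.diff_subset, fun hsup => (hsup hyS).2 rfl⟩
    have hUM : UMok T (S \ {y}) (j-1) := by
      have := hcrit.2 _ hSam
      exact (umok_ums _).mono_k (by omega)
    refine not_umok_of_heavy_pair (T := T) (S := S \ {y}) (A := SA) (B := SB)
      (by omega) ?_ ?_ hdAB (by rw [critSA.1]) (by rw [critSB.1]) ?_ hUM
    · exact fun z hz => ⟨hSAS hz, fun h => hyA ((Set.mem_singleton_iff.mp h) ▸ hz)⟩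
    · exact fun z hz => ⟨hSBS hz, fun h => hyB ((Set.mem_singleton_iff.mp h) ▸ hz)⟩
    · intro a' ha' b' hb'
      have hsubA : SA ⊆ S \ {y} :=
        fun z hz => ⟨hSAS hz, fun h => hyA ((Set.mem_singleton_iff.mp h) ▸ hz)⟩
      have hsubB : SB ⊆ S \ {y} :=
        fun z hz => ⟨hSBS hz, fun h => hyB ((Set.mem_singleton_iff.mp h) ▸ hz)⟩
      have R1 : reachIn T (S \ {y}) a' s0 :=
        (critSA.conn hj1 a' ha' s0 hs0).mono hsubA
      have R2 : reachIn T (S \ {y}) s0 t0 :=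
        ⟨q, fun x hx => ⟨hqS x hx, fun h => hyq ((Set.mem_singleton_iff.mp h) ▸ hx)⟩⟩
      have R3 : reachIn T (S \ {y}) t0 b' :=
        (critSB.conn hj1 t0 ht0 b' hb').mono hsubB
      exact (R1.trans R2).trans R3
  rcases Nat.lt_or_ge q.length 2 with hlen | hlen
  · -- q is a single edge; S = SA ∪ SB
    have hq1 : q.length = 1 := by omega
    obtain ⟨hadj', hsupp⟩ := walk_length_one q hq1
    have hSeq : S = SA ∪ SB := by
      apply Set.eq_of_subset_of_subset
      · intro y hy
        by_contra hyn
        rw [Set.mem_union] at hyn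
        push_neg at hyn
        have := f4 y hy hyn.1 hyn.2
        rw [hsupp] at this
        simp only [List.mem_cons, List.not_mem_nil, or_false] at this
        rcases this with rfl | rfl
        exacts [hyn.1 hs0, hyn.2 ht0]
      · exact Set.union_subset hSAS hSBS
    constructor
    · rw [hSeq, Set.ncard_union_eq hdAB (Set.toFinite _) (Set.toFinite _), cardSA, cardSB,
        show j - 1 = (j-2)+1 by omega, pow_succ]
      omega
    · exact ⟨SA, SB, s0, t0, hSeq, hdAB, hs0, ht0, hadj', critSA, critSB⟩
  · -- impossible: the connector has an internal vertex
    exfalso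
    obtain ⟨xq, r, hxt, hrsupp, hrlen⟩ := walk_snoc q (by omega)
    have hxqsup : xq ∈ q.support := hrsupp xq r.end_mem_support
    have hxqS : xq ∈ S := hqS xq hxqsup
    have hxqA : xq ∉ SA := by
      intro hxA
      have : (1:ℕ) ∈ W := ⟨xq, t0, hxA, ht0, SimpleGraph.Walk.cons hxt SimpleGraph.Walk.nil,
        ?_, by simp⟩
      · have := Nat.sInf_le this
        omega
      · intro x hx
        simp only [SimpleGraph.Walk.support_cons, SimpleGraph.Walk.support_nil,
          List.mem_cons, List.not_mem_nil, or_false] at hx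
        rcases hx with rfl | rfl
        exacts [hxqS, hSBS ht0]
    have hxqB : xq ∉ SB := fun hxB => hxt.ne (f2 xq hxqsup hxB)
    rcases Nat.lt_or_ge j 3 with hj2 | hj3
    · -- j = 2 : an adjacent pair in a proper subset
      have hj2' : j = 2 := by omega
      have hsub : ({xq, t0} : Set V) ⊂ S := by
        rw [Set.ssubset_def]
        constructor
        · intro z hz
          rcases hz with rfl | hz
          · exact hxqS
          · rw [Set.mem_singleton_iff] at hz
            exact hz ▸ hSBS ht0
        · intro hsup
          have := hsup (hSAS hs0)
          rcases this with h | h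
          · exact hxqA (h ▸ hs0)
          · rw [Set.mem_singleton_iff] at h
            exact hst (h)
      have h1 := hcrit.2 _ hsub
      have h2 := two_le_ums_of_adj (S := {xq, t0}) hxt (Set.mem_insert _ _)
        (Set.mem_insert_of_mem _ rfl)
      omega
    · -- j ≥ 3 : use L7 on SB
      have hL7 := ((IH (j-1) hj1 (by omega) SB critSB).2 (by omega)).2
      obtain ⟨ℓ, hℓB, hℓt0, hZ, hconn2⟩ := hL7 t0 ht0 xq hxqB hxt
      have hℓS : ℓ ∈ S := hSBS hℓB
      have hSam : S \ {ℓ} ⊂ S := by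
        rw [Set.ssubset_def]
        exact ⟨Set.diff_subset, fun hsup => (hsup hℓS).2 rfl⟩
      have hUM : UMok T (S \ {ℓ}) (j-1) := by
        have := hcrit.2 _ hSam
        exact (umok_ums _).mono_k (by omega)
      have hℓq : ℓ ∉ q.support := fun h => hℓt0 (f2 ℓ h hℓB)
      have hℓA : ℓ ∉ SA := fun h => Set.disjoint_left.mp hdAB h hℓB
      have hsubA : SA ⊆ S \ {ℓ} :=
        fun z hz => ⟨hSAS hz, fun h => hℓA ((Set.mem_singleton_iff.mp h) ▸ hz)⟩
      have hxqℓ : xq ≠ ℓ := fun h => hxqB (by rw [h]; exact hℓB)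
      refine not_umok_of_heavy_pair (T := T) (S := S \ {ℓ}) (A := SA)
        (B := (SB \ {ℓ}) ∪ {xq}) (by omega) hsubA ?_ ?_ (by rw [critSA.1]) hZ ?_ hUM
      · intro z hz
        rcases hz with ⟨hz1, hz2⟩ | hz
        · exact ⟨hSBS hz1, hz2⟩
        · rw [Set.mem_singleton_iff] at hz
          subst hz
          exact ⟨hxqS, fun h => hxqℓ (Set.mem_singleton_iff.mp h)⟩
      · rw [Set.disjoint_left]
        intro z hzA hzB
        rcases hzB with ⟨hz1, _⟩ | hz
        · exact Set.disjoint_left.mp hdAB hzA hz1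
        · rw [Set.mem_singleton_iff] at hz
          exact hxqA (hz ▸ hzA)
      · intro a' ha' b' hb'
        have R1 : reachIn T (S \ {ℓ}) a' s0 :=
          (critSA.conn hj1 a' ha' s0 hs0).mono hsubA
        have R2 : reachIn T (S \ {ℓ}) s0 xq :=
          ⟨r, fun x hx => ⟨hqS x (hrsupp x hx),
            fun h => hℓq ((Set.mem_singleton_iff.mp h) ▸ hrsupp x hx)⟩⟩
        have hxqmem : xq ∈ S \ {ℓ} := ⟨hxqS, fun h => hxqℓ (Set.mem_singleton_iff.mp h)⟩
        have ht0mem : t0 ∈ S \ {ℓ} := ⟨hSBS ht0, fun h => hℓt0 (Set.mem_singleton_iff.mp h).symm⟩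
        have R3 : reachIn T (S \ {ℓ}) xq b' := by
          rcases hb' with hb' | hb'
          · exact (reachIn_adj hxt hxqmem ht0mem).trans
              ((hconn2 b' hb').mono (fun z hz => ⟨hSBS hz.1, hz.2⟩))
          · rw [Set.mem_singleton_iff] at hb'
            subst hb'
            exact reachIn.refl hxqmem
        exact (R1.trans R2).trans R3
/-- Core of the pendant-leaf lemma, assuming `t0` in the first half. -/
lemma L7core {j : ℕ} (hj : 2 ≤ j) (IH : ∀ i, 1 ≤ i → i < j → Grand T i)
    {S D1 D2 : Set V} {d1 d2 : V} (hS : S = D1 ∪ D2) (hd : Disjoint D1 D2)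
    (hd1 : d1 ∈ D1) (hd2 : d2 ∈ D2) (hadj12 : T.Adj d1 d2)
    (hc1 : CritS T D1 (j-1)) (hc2 : CritS T D2 (j-1))
    {t0 x : V} (ht0 : t0 ∈ D1) (hx : x ∉ S) (hxt : T.Adj x t0) :
    ∃ ℓ ∈ S, ℓ ≠ t0 ∧ j ≤ ums T ((S \ {ℓ}) ∪ {x}) ∧
      ∀ b ∈ S \ {ℓ}, reachIn T (S \ {ℓ}) t0 b := by
  have hj1 : (1:ℕ) ≤ j - 1 := by omega
  have hD1S : D1 ⊆ S := hS ▸ Set.subset_union_left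
  have hD2S : D2 ⊆ S := hS ▸ Set.subset_union_right
  have hxD1 : x ∉ D1 := fun h => hx (hD1S h)
  rcases Nat.lt_or_ge j 3 with hj2 | hj3
  · -- j = 2 : halves are singletons
    have hcard2 : D2.ncard = 1 := by
      have := (IH (j-1) hj1 (by omega) D2 hc2).1
      rwa [show j - 1 - 1 = 0 by omega, pow_zero] at this
    obtain ⟨z, hz⟩ := Set.ncard_eq_one.mp hcard2
    have hzd2 : z = d2 := by rw [hz] at hd2; exact (Set.mem_singleton_iff.mp hd2).symm
    rw [hzd2] at hz
    refine ⟨d2, hD2S hd2, fun h => Set.disjoint_left.mp hd ht0 (h ▸ hd2), ?_, ?_⟩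
    · have h2 := two_le_ums_of_adj (S := (S \ {d2}) ∪ {x}) hxt
        (Set.mem_union_right _ rfl)
        (Set.mem_union_left _ ⟨hD1S ht0, fun h =>
          Set.disjoint_left.mp hd ht0 ((Set.mem_singleton_iff.mp h) ▸ hd2)⟩)
      omega
    · intro b hb
      have hbD1 : b ∈ D1 := by
        rcases (hS ▸ hb.1 : b ∈ D1 ∪ D2) with h | h
        · exact h
        · rw [hz, Set.mem_singleton_iff] at h
          exact absurd h (fun hh => hb.2 (hh ▸ rfl))
      exact (hc1.conn hj1 t0 ht0 b hbD1).mono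
        (fun w hw => ⟨hD1S hw, fun h => Set.disjoint_left.mp hd
          ((Set.mem_singleton_iff.mp h) ▸ hw) hd2⟩)
  · -- j ≥ 3
    have hL71 := ((IH (j-1) hj1 (by omega) D1 hc1).2 (by omega)).2
    obtain ⟨ℓ₁, hℓ₁D1, hℓ₁t0, hZ1, hconn1⟩ := hL71 t0 ht0 x hxD1 hxt
    by_cases hcase : ℓ₁ = d1
    · -- the returned leaf is the attachment of D2; delete a leaf of D2 instead
      subst hcase
      have hL72 := ((IH (j-1) hj1 (by omega) D2 hc2).2 (by omega)).2
      obtain ⟨ℓ₂, hℓ₂D2, hℓ₂d2, hZ2, hconn2⟩ := hL72 d2 hd2 ℓ₁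
        (fun h => Set.disjoint_left.mp hd hd1 h) hadj12
      have hℓ₂t0 : ℓ₂ ≠ t0 := fun h => Set.disjoint_left.mp hd ht0 (h ▸ hℓ₂D2)
      have hD1X : ∀ z ∈ D1, z ∈ S \ {ℓ₂} :=
        fun z hz => ⟨hD1S hz, fun h => Set.disjoint_left.mp hd
          ((Set.mem_singleton_iff.mp h) ▸ hz) hℓ₂D2⟩
      have hd2X : d2 ∈ S \ {ℓ₂} := ⟨hD2S hd2, fun h => hℓ₂d2 (Set.mem_singleton_iff.mp h).symm⟩
      refine ⟨ℓ₂, hD2S hℓ₂D2, hℓ₂t0, ?_, ?_⟩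
      · -- heaviness of (S \ {ℓ₂}) ∪ {x}
        have key : ¬ UMok T ((S \ {ℓ₂}) ∪ {x}) (j-1) := by
          refine not_umok_of_heavy_pair (T := T) (A := (D1 \ {ℓ₁}) ∪ {x})
            (B := (D2 \ {ℓ₂}) ∪ {ℓ₁}) (by omega) ?_ ?_ ?_ hZ1 hZ2 ?_
          · rintro z (⟨hz1, hz2⟩ | hz)
            · exact Set.mem_union_left _ (hD1X z hz1)
            · exact Set.mem_union_right _ hz
          · rintro z (⟨hz1, hz2⟩ | hz)
            · exact Set.mem_union_left _ ⟨hD2S hz1, hz2⟩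
            · rw [Set.mem_singleton_iff] at hz
              exact Set.mem_union_left _ (hz ▸ hD1X ℓ₁ hd1)
          · rw [Set.disjoint_left]
            rintro z (⟨hz1, hz2⟩ | hz) hzB
            · rcases hzB with ⟨hb1, _⟩ | hb
              · exact Set.disjoint_left.mp hd hz1 hb1
              · exact hz2 hb
            · rw [Set.mem_singleton_iff] at hz
              subst hz
              rcases hzB with ⟨hb1, _⟩ | hb
              · exact hx (hD2S hb1)
              · rw [Set.mem_singleton_iff] at hb
                exact hx (hb ▸ hD1S hd1)
          · -- reachability between the pieces
            intro a' ha' b' hb'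
            have hxmem : x ∈ (S \ {ℓ₂}) ∪ {x} := Set.mem_union_right _ rfl
            have ht0mem : t0 ∈ (S \ {ℓ₂}) ∪ {x} := Set.mem_union_left _ (hD1X t0 ht0)
            have R1 : reachIn T ((S \ {ℓ₂}) ∪ {x}) a' t0 := by
              rcases ha' with ha' | ha'
              · exact ((hconn1 a' ha').mono
                  (fun z hz => Set.mem_union_left _ (hD1X z hz.1))).symm
              · rw [Set.mem_singleton_iff] at ha'
                subst ha'
                exact reachIn_adj hxt hxmem ht0mem
            have R2 : reachIn T ((S \ {ℓ₂}) ∪ {x}) t0 ℓ₁ :=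
              (hc1.conn hj1 t0 ht0 ℓ₁ hd1).mono
                (fun z hz => Set.mem_union_left _ (hD1X z hz))
            have R3 : reachIn T ((S \ {ℓ₂}) ∪ {x}) ℓ₁ b' := by
              rcases hb' with hb' | hb'
              · refine (reachIn_adj hadj12 (Set.mem_union_left _ (hD1X ℓ₁ hd1))
                  (Set.mem_union_left _ hd2X)).trans ?_
                exact (hconn2 b' hb').mono
                  (fun z hz => Set.mem_union_left _ ⟨hD2S hz.1, hz.2⟩)
              · rw [Set.mem_singleton_iff] at hb'
                subst hb'
                exact reachIn.refl (Set.mem_union_left _ (hD1X b' hd1))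
            exact R1.trans (R2.trans R3)
        have := lt_ums_iff.mpr key
        omega
      · -- connectivity of S \ {ℓ₂} from t0
        intro b hb
        have hbS : b ∈ D1 ∪ D2 := hS ▸ hb.1
        rcases hbS with hbD | hbD
        · exact (hc1.conn hj1 t0 ht0 b hbD).mono (fun z hz => hD1X z hz)
        · have R1 : reachIn T (S \ {ℓ₂}) t0 ℓ₁ :=
            (hc1.conn hj1 t0 ht0 ℓ₁ hd1).mono (fun z hz => hD1X z hz)
          have R2 : reachIn T (S \ {ℓ₂}) ℓ₁ d2 := reachIn_adj hadj12 (hD1X ℓ₁ hd1) hd2X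
          have R3 : reachIn T (S \ {ℓ₂}) d2 b :=
            (hconn2 b ⟨hbD, hb.2⟩).mono (fun z hz => ⟨hD2S hz.1, hz.2⟩)
          exact R1.trans (R2.trans R3)
    · -- the returned leaf works directly
      have hℓ₁S : ℓ₁ ∈ S := hD1S hℓ₁D1
      have hD2X : ∀ z ∈ D2, z ∈ S \ {ℓ₁} :=
        fun z hz => ⟨hD2S hz, fun h => Set.disjoint_left.mp hd hℓ₁D1
          ((Set.mem_singleton_iff.mp h).symm ▸ hz)⟩
      have hd1X : d1 ∈ S \ {ℓ₁} := ⟨hD1S hd1, fun h => hcase (Set.mem_singleton_iff.mp h).symm⟩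
      refine ⟨ℓ₁, hℓ₁S, hℓ₁t0, ?_, ?_⟩
      · have key : ¬ UMok T ((S \ {ℓ₁}) ∪ {x}) (j-1) := by
          refine not_umok_of_heavy_pair (T := T) (A := (D1 \ {ℓ₁}) ∪ {x})
            (B := D2) (by omega) ?_ ?_ ?_ hZ1 (by rw [hc2.1]) ?_
          · rintro z (⟨hz1, hz2⟩ | hz)
            · exact Set.mem_union_left _ ⟨hD1S hz1, hz2⟩
            · exact Set.mem_union_right _ hz
          · exact fun z hz => Set.mem_union_left _ (hD2X z hz)
          · rw [Set.disjoint_left]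
            rintro z (⟨hz1, _⟩ | hz) hzB
            · exact Set.disjoint_left.mp hd hz1 hzB
            · rw [Set.mem_singleton_iff] at hz
              exact hx (hz ▸ hD2S hzB)
          · intro a' ha' b' hb'
            have hxmem : x ∈ (S \ {ℓ₁}) ∪ {x} := Set.mem_union_right _ rfl
            have hsub1 : D1 \ {ℓ₁} ⊆ (S \ {ℓ₁}) ∪ {x} :=
              fun z hz => Set.mem_union_left _ ⟨hD1S hz.1, hz.2⟩
            have ht0mem : t0 ∈ (S \ {ℓ₁}) ∪ {x} :=
              hsub1 ⟨ht0, fun h => hℓ₁t0 (Set.mem_singleton_iff.mp h).symm⟩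
            have R1 : reachIn T ((S \ {ℓ₁}) ∪ {x}) a' t0 := by
              rcases ha' with ha' | ha'
              · exact ((hconn1 a' ha').mono hsub1).symm
              · rw [Set.mem_singleton_iff] at ha'
                subst ha'
                exact reachIn_adj hxt hxmem ht0mem
            have R2 : reachIn T ((S \ {ℓ₁}) ∪ {x}) t0 d1 :=
              (hconn1 d1 ⟨hd1, fun h => hcase (Set.mem_singleton_iff.mp h).symm⟩).mono hsub1
            have R3 : reachIn T ((S \ {ℓ₁}) ∪ {x}) d1 b' := by
              refine (reachIn_adj hadj12 (Set.mem_union_left _ hd1X)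
                (Set.mem_union_left _ (hD2X d2 hd2))).trans ?_
              exact (hc2.conn hj1 d2 hd2 b' hb').mono
                (fun z hz => Set.mem_union_left _ (hD2X z hz))
            exact R1.trans (R2.trans R3)
        have := lt_ums_iff.mpr key
        omega
      · intro b hb
        have hbS : b ∈ D1 ∪ D2 := hS ▸ hb.1
        have hsub1 : D1 \ {ℓ₁} ⊆ S \ {ℓ₁} := fun z hz => ⟨hD1S hz.1, hz.2⟩
        rcases hbS with hbD | hbD
        · exact (hconn1 b ⟨hbD, hb.2⟩).mono hsub1
        · have R1 : reachIn T (S \ {ℓ₁}) t0 d1 :=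
            (hconn1 d1 ⟨hd1, fun h => hcase (Set.mem_singleton_iff.mp h).symm⟩).mono hsub1
          have R2 : reachIn T (S \ {ℓ₁}) d1 d2 := reachIn_adj hadj12 hd1X (hD2X d2 hd2)
          have R3 : reachIn T (S \ {ℓ₁}) d2 b :=
            (hc2.conn hj1 d2 hd2 b hbD).mono (fun z hz => hD2X z hz)
          exact R1.trans (R2.trans R3)

lemma L7step {j : ℕ} (hj : 2 ≤ j) (IH : ∀ i, 1 ≤ i → i < j → Grand T i)
    {S : Set V} (hdec : DecompP T S j) : L7c T S j := by
  obtain ⟨D1, D2, d1, d2, hS, hd, hd1, hd2, hadj12, hc1, hc2⟩ := hdec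
  intro t0 ht0 x hx hxt
  have ht0' : t0 ∈ D1 ∪ D2 := hS ▸ ht0
  rcases ht0' with h | h
  · exact L7core hj IH hS hd hd1 hd2 hadj12 hc1 hc2 h hx hxt
  · exact L7core hj IH (by rw [hS, Set.union_comm]) hd.symm hd2 hd1 hadj12.symm hc2 hc1 h hx hxt

/-- The grand induction. -/
theorem grand (hT : T.IsTree) : ∀ j, 1 ≤ j → Grand T j := by
  intro j
  induction j using Nat.strong_induction_on with
  | _ j IH =>
    intro hj S hcrit
    rcases Nat.lt_or_ge j 2 with h2 | h2
    · -- j = 1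
      have hj1 : j = 1 := by omega
      subst hj1
      refine ⟨?_, by omega⟩
      obtain ⟨v, hv⟩ := hcrit.nonempty le_rfl
      have hS : S = {v} := by
        apply Set.eq_of_subset_of_subset
        · intro y hy
          by_contra hne
          rw [Set.mem_singleton_iff] at hne
          have hss : {v} ⊂ S := by
            rw [Set.ssubset_def]
            exact ⟨Set.singleton_subset_iff.mpr hv,
              fun hsup => hne (Set.mem_singleton_iff.mp (hsup hy))⟩
          have h1 := hcrit.2 {v} hss
          have h0 : ums T {v} = 0 := by omega
          have := umok_zero_iff.mp (h0 ▸ umok_ums (T := T) {v})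
          exact absurd this (Set.singleton_ne_empty v)
        · exact Set.singleton_subset_iff.mpr hv
      rw [hS]
      simp
    · have hIH : ∀ i, 1 ≤ i → i < j → Grand T i := fun i h1 hlt => IH i hlt h1
      obtain ⟨hcard, hdec⟩ := engine hT h2 hIH hcrit
      exact ⟨hcard, fun _ => ⟨hdec, L7step h2 hIH hdec⟩⟩
/-- Any finite graph has a unique-maximum coloring with `card W` colors. -/
lemma exists_umcoloring {W : Type} [Fintype W] (G : SimpleGraph W) :
    ∃ C : W → Fin (Fintype.card W), IsUMColoring (pathEdges G) C := by
  classical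
  refine ⟨fun v => Fintype.equivFin W v, ?_⟩
  rintro e ⟨u, w, p, hp, rfl⟩
  obtain ⟨v, hv, hmax⟩ := p.support.toFinset.exists_max_image
    (fun x => Fintype.equivFin W x) ⟨u, by simp⟩
  refine ⟨v, ⟨hv, fun x hx => hmax x hx⟩, ?_⟩
  rintro y ⟨hy, hymax⟩
  exact (Fintype.equivFin W).injective (Fin.le_antisymm (hmax y hy) (hymax v hv))

lemma um_nonempty {W : Type} [Fintype W] (G : SimpleGraph W) :
    {m | ∃ C : W → Fin m, IsUMColoring (pathEdges G) C}.Nonempty :=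
  ⟨Fintype.card W, exists_umcoloring G⟩

/-- `UM` agrees with `ums` on the full vertex set. -/
lemma um_eq_ums : UM T = ums T Set.univ := by
  have hset : {m | ∃ C : V → Fin m, IsUMColoring (pathEdges T) C} = {m | UMok T Set.univ m} := by
    ext m
    constructor
    · rintro ⟨C, hC⟩
      refine ⟨fun v => (C v).val, fun v _ => (C v).is_lt, ?_⟩
      intro u w p hp hs
      have he : (p.support.toFinset : Finset V) ∈ pathEdges T := ⟨u, w, p, hp, rfl⟩
      obtain ⟨v, ⟨hv, hmax⟩, huniq⟩ := hC _ he
      refine ⟨v, ⟨List.mem_toFinset.mp hv, fun x hx =>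
        hmax x (List.mem_toFinset.mpr hx)⟩, ?_⟩
      rintro y ⟨hy, hymax⟩
      exact huniq y ⟨List.mem_toFinset.mpr hy, fun x hx =>
        hymax x (List.mem_toFinset.mp hx)⟩
    · rintro ⟨C, hb, hv⟩
      refine ⟨fun v => ⟨C v, hb v (Set.mem_univ v)⟩, ?_⟩
      rintro e ⟨u, w, p, hp, rfl⟩
      obtain ⟨v, ⟨hvs, hmax⟩, huniq⟩ := hv p hp (fun x _ => Set.mem_univ x)
      refine ⟨v, ⟨List.mem_toFinset.mpr hvs, fun x hx => hmax x (List.mem_toFinset.mp hx)⟩, ?_⟩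
      rintro y ⟨hy, hymax⟩
      exact huniq y ⟨List.mem_toFinset.mp hy, fun x hx => hymax x (List.mem_toFinset.mpr hx)⟩
  unfold UM umNum ums
  rw [hset]

/-- Lift a walk of `T` with support in `S` to the induced subgraph. -/
lemma lift_walk {S : Set V} {u w : V} (p : T.Walk u w) (hs : ∀ x ∈ p.support, x ∈ S)
    (hu : u ∈ S) (hw : w ∈ S) :
    ∃ q : ((⊤ : T.Subgraph).induce S).coe.Walk ⟨u, hu⟩ ⟨w, hw⟩,
      q.support.map Subtype.val = p.support := by
  induction p with
  | nil => exact ⟨SimpleGraph.Walk.nil, by simp⟩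
  | @cons a b c h p' ih =>
    have hb : b ∈ S := hs b (by simp)
    have hs' : ∀ x ∈ p'.support, x ∈ S := fun x hx => hs x (by simp [hx])
    obtain ⟨q', hq'⟩ := ih hs' hb hw
    have hadj : ((⊤ : T.Subgraph).induce S).coe.Adj ⟨a, hu⟩ ⟨b, hb⟩ := by
      simp only [SimpleGraph.Subgraph.coe_adj, SimpleGraph.Subgraph.induce_adj,
        SimpleGraph.Subgraph.top_adj]
      exact ⟨hu, hb, h⟩
    refine ⟨SimpleGraph.Walk.cons hadj q', ?_⟩
    rw [SimpleGraph.Walk.support_cons, List.map_cons, hq', SimpleGraph.Walk.support_cons]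

/-- The set-criticality induced by subgraph-criticality. -/
lemma ums_lt_of_critical (hcrit : UMCritical T) {k : ℕ} (hum : UM T = k)
    {S : Set V} (hS : S ≠ Set.univ) : ums T S < k := by
  classical
  set G' : T.Subgraph := (⊤ : T.Subgraph).induce S with hG'
  have hne : G' ≠ ⊤ := by
    intro h
    apply hS
    have := congrArg SimpleGraph.Subgraph.verts h
    simpa [hG'] using this
  have hlt : UM G'.coe < k := hum ▸ hcrit G' hne
  have hfin : Fintype ↥G'.verts := Fintype.ofFinite _
  have hUMmem : ∃ C : ↥G'.verts → Fin (UM G'.coe), IsUMColoring (pathEdges G'.coe) C := by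
    have := Nat.sInf_mem (um_nonempty (W := ↥G'.verts) G'.coe)
    exact this
  obtain ⟨C, hC⟩ := hUMmem
  have humok : UMok T S (UM G'.coe) := by
    refine ⟨fun v => if h : v ∈ S then (C ⟨v, h⟩).val else 0, ?_, ?_⟩
    · intro v hv
      simp only [dif_pos hv]
      exact (C ⟨v, hv⟩).is_lt
    · intro u w p hp hs
      have hu : u ∈ S := hs u p.start_mem_support
      have hw : w ∈ S := hs w p.end_mem_support
      obtain ⟨q, hqmap⟩ := lift_walk p hs hu hw
      have hqpath : q.IsPath := by
        rw [SimpleGraph.Walk.isPath_def]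
        have : (q.support.map Subtype.val).Nodup := by
          rw [hqmap]; exact hp.support_nodup
        exact this.of_map _
      have he : q.support.toFinset ∈ pathEdges G'.coe :=
        ⟨_, _, q, hqpath, by apply Finset.ext; intro x; simp⟩
      obtain ⟨vh, ⟨hvhe, hvhmax⟩, huniq⟩ := hC _ he
      have hCeq : ∀ xh : ↥G'.verts,
          (if h : (xh : V) ∈ S then (C ⟨(xh : V), h⟩).val else 0) = (C xh).val := by
        intro xh
        have hxhS : (xh : V) ∈ S := xh.2
        rw [dif_pos hxhS]
      have hmemmap : ∀ x : V, x ∈ p.support → ∃ xh : ↥G'.verts, xh ∈ q.support ∧ (xh : V) = x := by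
        intro x hx
        rw [← hqmap] at hx
        obtain ⟨xh, hxh, hval⟩ := List.mem_map.mp hx
        exact ⟨xh, hxh, hval⟩
      refine ⟨(vh : V), ⟨?_, ?_⟩, ?_⟩
      · rw [← hqmap]
        exact List.mem_map.mpr ⟨vh, List.mem_toFinset.mp hvhe, rfl⟩
      · intro x hx
        obtain ⟨xh, hxhq, rfl⟩ := hmemmap x hx
        simp only [hCeq]
        rw [← Fin.le_def]
        exact hvhmax xh (List.mem_toFinset.mpr hxhq)
      · rintro y ⟨hy, hymax⟩
        obtain ⟨yh, hyhq, rfl⟩ := hmemmap y hy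
        have : yh = vh := by
          refine huniq yh ⟨List.mem_toFinset.mpr hyhq, fun uh huh => ?_⟩
          have huhp : (uh : V) ∈ p.support := by
            rw [← hqmap]
            exact List.mem_map.mpr ⟨uh, List.mem_toFinset.mp huh, rfl⟩
          have hle := hymax _ huhp
          simp only [hCeq] at hle
          rw [Fin.le_def]
          exact hle
        rw [this]
  have := ums_le_iff.mpr humok
  omega

end UMwork

theorem stmt9 {V : Type} [Fintype V] (k : ℕ) (hk : 1 ≤ k)
    (T : SimpleGraph V) (hT : T.IsTree) (hcrit : UMCriticalK k T) :
    Fintype.card V = 2 ^ (k - 1) := by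
  classical
  obtain ⟨hcr, hum⟩ := hcrit
  have humset : UM T = UMwork.ums T Set.univ := UMwork.um_eq_ums
  have hcritset : UMwork.CritS T Set.univ k := by
    constructor
    · rw [← humset, hum]
    · intro S' hS'
      exact UMwork.ums_lt_of_critical hcr hum (fun h => hS'.2 (by simp [h]))
  have hcard := (UMwork.grand hT k hk Set.univ hcritset).1
  rw [Set.ncard_univ, Nat.card_eq_fintype_card] at hcard
  exact hcard
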